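/- arXiv:1402.4377 — 2 statements merged into one kernel-verified Lean document; each statement's English description precedes it below -/
import Mathlib

section
/- For all z, w in the unit disk, the integral ∫₀¹ t·w̄/(1-t·w̄·z)⁴ dt satisfies |∫₀¹ t·w̄/(1-t·w̄·z)⁴ dt| ≤ C/|1-w̄z|³ for an absolute constant C. -/
open MeasureTheory Complex intervalIntegral

/-- Uniform kernel estimate: |∫₀¹ t w̄ /(1-t w̄ z)⁴ dt| ≤ C/|1-w̄z|³ for z,w in the disk. -/
theorem stmt2 :
    ∃ C > (0 : ℝ), ∀ z ∈ Metric.ball (0 : ℂ) 1, ∀ w ∈ Metric.ball (0 : ℂ) 1,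
      ‖∫ t in (0 : ℝ)..1, ((t : ℂ) * (starRingEnd ℂ) w) /
          (1 - (t : ℂ) * (starRingEnd ℂ) w * z) ^ 4‖ ≤
        C / ‖1 - (starRingEnd ℂ) w * z‖ ^ 3 := by
  refine ⟨16, by norm_num, ?_⟩
  intro z hz w hw
  have hz1 : ‖z‖ < 1 := by simpa using hz
  have hw1 : ‖w‖ < 1 := by simpa using hw
  set a : ℂ := (starRingEnd ℂ) w * z with ha
  have haw : ‖a‖ = ‖w‖ * ‖z‖ := by
    rw [ha, norm_mul]; simp
  have han : ‖a‖ < 1 := by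
    rw [haw]
    nlinarith [norm_nonneg w, norm_nonneg z]
  have han0 : 0 ≤ ‖a‖ := norm_nonneg a
  set d : ℝ := ‖(1 : ℂ) - a‖ with hdd
  have hd0 : 0 < d := by
    have h := norm_sub_norm_le (1 : ℂ) a
    simp only [norm_one] at h
    linarith
  have hd2 : d < 2 := by
    have h := norm_sub_le (1 : ℂ) a
    simp only [norm_one] at h
    linarith
  set t₀ : ℝ := 1 - d / 2 with ht₀
  have ht₀0 : 0 < t₀ := by simp only [ht₀]; linarith
  have ht₀1 : t₀ < 1 := by simp only [ht₀]; linarith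
  set f : ℝ → ℂ := fun t => ((t : ℂ) * (starRingEnd ℂ) w) /
      (1 - (t : ℂ) * (starRingEnd ℂ) w * z) ^ 4 with hf
  clear_value a d t₀ f
  -- lower bound on denominator, version 1
  have hlow1 : ∀ t : ℝ, 0 ≤ t → t ≤ 1 → 1 - t ≤ ‖1 - (t : ℂ) * (starRingEnd ℂ) w * z‖ := by
    intro t ht0 ht1
    have h := norm_sub_norm_le (1 : ℂ) ((t : ℂ) * (starRingEnd ℂ) w * z)
    have hn : ‖(t : ℂ) * (starRingEnd ℂ) w * z‖ = |t| * ‖a‖ := by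
      rw [mul_assoc, norm_mul, ← ha]; simp
    simp only [norm_one, hn] at h
    have : |t| * ‖a‖ ≤ t := by
      rw [_root_.abs_of_nonneg ht0]
      nlinarith
    linarith
  have hne : ∀ t : ℝ, 0 ≤ t → t ≤ 1 → (1 - (t : ℂ) * (starRingEnd ℂ) w * z) ≠ 0 := by
    intro t ht0 ht1
    intro hcontra
    have h := norm_sub_norm_le (1 : ℂ) ((t : ℂ) * (starRingEnd ℂ) w * z)
    have hn : ‖(t : ℂ) * (starRingEnd ℂ) w * z‖ = |t| * ‖a‖ := by
      rw [mul_assoc, norm_mul, ← ha]; simp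
    rw [hcontra] at h
    simp only [norm_one, norm_zero, hn, _root_.abs_of_nonneg ht0] at h
    nlinarith
  -- lower bound, version 2
  have hlow2 : ∀ t : ℝ, 0 ≤ t → t ≤ 1 →
      d - (1 - t) ≤ ‖1 - (t : ℂ) * (starRingEnd ℂ) w * z‖ := by
    intro t ht0 ht1
    have heq : (1 : ℂ) - a = (1 - (t : ℂ) * (starRingEnd ℂ) w * z) + (((t : ℝ) : ℂ) - 1) * a := by
      rw [ha]; ring
    have h := heq ▸ norm_add_le (1 - (t : ℂ) * (starRingEnd ℂ) w * z) ((((t : ℝ) : ℂ) - 1) * a)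
    have hv : ‖(((t : ℝ) : ℂ) - 1)‖ = 1 - t := by
      rw [show (((t : ℝ) : ℂ) - 1) = ((t - 1 : ℝ) : ℂ) by push_cast; ring]
      rw [Complex.norm_real, Real.norm_eq_abs, _root_.abs_of_nonpos (by linarith)]
      ring
    have hn : ‖(((t : ℝ) : ℂ) - 1) * a‖ = (1 - t) * ‖a‖ := by rw [norm_mul, hv]
    rw [hn, ← hdd] at h
    have hle : (1 - t) * ‖a‖ ≤ 1 - t := by nlinarith
    linarith
  -- continuity / integrability of f
  have hcont : ContinuousOn f (Set.Icc 0 1) := by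
    rw [hf]
    apply ContinuousOn.div
    · exact (Complex.continuous_ofReal.continuousOn).mul continuousOn_const
    · apply ContinuousOn.pow
      exact continuousOn_const.sub
        (((Complex.continuous_ofReal.continuousOn).mul continuousOn_const).mul continuousOn_const)
    · intro t ht
      exact pow_ne_zero 4 (hne t ht.1 ht.2)
  have hint1 : IntervalIntegrable f volume 0 t₀ := by
    apply ContinuousOn.intervalIntegrable
    apply hcont.mono
    rw [Set.uIcc_of_le ht₀0.le]
    exact Set.Icc_subset_Icc le_rfl ht₀1.le
  have hint2 : IntervalIntegrable f volume t₀ 1 := by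
    apply ContinuousOn.intervalIntegrable
    apply hcont.mono
    rw [Set.uIcc_of_le ht₀1.le]
    exact Set.Icc_subset_Icc ht₀0.le le_rfl
  -- numerator bound
  have hnum : ∀ t : ℝ, 0 ≤ t → t ≤ 1 → ‖(t : ℂ) * (starRingEnd ℂ) w‖ ≤ 1 := by
    intro t ht0 ht1
    rw [norm_mul]
    have : ‖((t : ℝ) : ℂ)‖ = |t| := by simp
    rw [this, _root_.abs_of_nonneg ht0]
    have : ‖(starRingEnd ℂ) w‖ = ‖w‖ := by simp
    nlinarith [norm_nonneg w]
  -- split the integral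
  have hsplit : (∫ t in (0 : ℝ)..1, f t) = (∫ t in (0 : ℝ)..t₀, f t) + ∫ t in t₀..(1 : ℝ), f t :=
    (integral_add_adjacent_intervals hint1 hint2).symm
  -- bound the first piece
  have hg_int : IntervalIntegrable (fun t : ℝ => ((1 - t) ^ 4)⁻¹) volume 0 t₀ := by
    apply ContinuousOn.intervalIntegrable
    apply ContinuousOn.inv₀
    · fun_prop
    · intro t ht
      rw [Set.uIcc_of_le ht₀0.le] at ht
      have : 1 - t > 0 := by
        have := ht.2
        simp only [ht₀] at this
        linarith
      positivity
  have hbound1 : ∀ t ∈ Set.uIoc (0 : ℝ) t₀, ‖f t‖ ≤ ((1 - t) ^ 4)⁻¹ := by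
    intro t ht
    rw [Set.uIoc_of_le ht₀0.le] at ht
    have ht0 : 0 ≤ t := ht.1.le
    have ht1 : t ≤ 1 := ht.2.trans ht₀1.le
    have htlt : t < 1 := lt_of_le_of_lt ht.2 ht₀1
    rw [hf]
    simp only [norm_div, norm_pow]
    rw [← one_div]
    apply div_le_div₀ zero_le_one (hnum t ht0 ht1) (pow_pos (show (0:ℝ) < 1 - t by linarith) 4)
    exact pow_le_pow_left₀ (by linarith) (hlow1 t ht0 ht1) 4
  have hval1 : (∫ t in (0 : ℝ)..t₀, ((1 - t) ^ 4)⁻¹) =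
      (3 * (1 - t₀) ^ 3)⁻¹ - (3 : ℝ)⁻¹ := by
    have hder : ∀ t ∈ Set.uIcc (0 : ℝ) t₀,
        HasDerivAt (fun s : ℝ => (3 * (1 - s) ^ 3)⁻¹) (((1 - t) ^ 4)⁻¹) t := by
      intro t ht
      rw [Set.uIcc_of_le ht₀0.le] at ht
      have htpos : 0 < 1 - t := by
        have := ht.2; simp only [ht₀] at this; linarith
      have h1 : HasDerivAt (fun s : ℝ => 1 - s) (-1) t := by
        simpa using (hasDerivAt_id t).const_sub 1
      have h2 : HasDerivAt (fun s : ℝ => (1 - s) ^ 3) (3 * (1 - t) ^ 2 * (-1)) t := by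
        simpa using h1.fun_pow 3
      have h3 : HasDerivAt (fun s : ℝ => 3 * (1 - s) ^ 3) (3 * (3 * (1 - t) ^ 2 * (-1))) t :=
        h2.const_mul 3
      have h4 := h3.fun_inv (by positivity)
      refine h4.congr_deriv ?_
      symm; rw [eq_div_iff (by positivity)]
      field_simp
    rw [integral_eq_sub_of_hasDerivAt hder hg_int]
    norm_num
  have hpiece1 : ‖∫ t in (0 : ℝ)..t₀, f t‖ ≤ (3 * (d / 2) ^ 3)⁻¹ - (3 : ℝ)⁻¹ := by
    have h := intervalIntegral.norm_integral_le_of_norm_le (μ := volume) (a := 0) (b := t₀) (f := f)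
      (g := fun t => ((1 - t) ^ 4)⁻¹) ht₀0.le (Filter.Eventually.of_forall fun t ht => hbound1 t (by rwa [Set.uIoc_of_le ht₀0.le]))
      hg_int
    rw [hval1] at h
    have h10 : 1 - t₀ = d / 2 := by simp only [ht₀]; ring
    rw [h10] at h
    refine h.trans (le_trans (le_abs_self _) (le_of_eq (_root_.abs_of_nonneg ?_)))
    have : (3 : ℝ)⁻¹ ≤ (3 * (d / 2) ^ 3)⁻¹ := by
      apply inv_anti₀ (by positivity)
      have h8 : 0 ≤ (2 - d) * (4 + 2 * d + d ^ 2) := mul_nonneg (by linarith) (by positivity)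
      nlinarith [h8]
    linarith
  -- bound the second piece
  have hpiece2 : ‖∫ t in t₀..(1 : ℝ), f t‖ ≤ ((d / 2) ^ 4)⁻¹ * (d / 2) := by
    have h := norm_integral_le_of_norm_le_const (a := t₀) (b := 1) (f := f)
      (C := ((d / 2) ^ 4)⁻¹) ?_
    · have : |1 - t₀| = d / 2 := by
        rw [_root_.abs_of_nonneg (by linarith)]
        simp only [ht₀]; ring
      rwa [this] at h
    · intro t ht
      rw [Set.uIoc_of_le ht₀1.le] at ht
      have ht0 : 0 ≤ t := le_trans ht₀0.le ht.1.le
      have ht1 : t ≤ 1 := ht.2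
      have hlb : d / 2 ≤ ‖1 - (t : ℂ) * (starRingEnd ℂ) w * z‖ := by
        have h2 := hlow2 t ht0 ht1
        have : 1 - t ≤ 1 - t₀ := by linarith [ht.1.le]
        have h10 : 1 - t₀ = d / 2 := by simp only [ht₀]; ring
        linarith
      rw [hf]
      simp only [norm_div, norm_pow]
      rw [← one_div]
      apply div_le_div₀ zero_le_one (hnum t ht0 ht1) (by positivity)
      exact pow_le_pow_left₀ (by positivity) hlb 4
  -- combine
  rw [hsplit]
  calc ‖(∫ t in (0 : ℝ)..t₀, f t) + ∫ t in t₀..(1 : ℝ), f t‖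
      ≤ ‖∫ t in (0 : ℝ)..t₀, f t‖ + ‖∫ t in t₀..(1 : ℝ), f t‖ := norm_add_le _ _
    _ ≤ ((3 * (d / 2) ^ 3)⁻¹ - (3 : ℝ)⁻¹) + ((d / 2) ^ 4)⁻¹ * (d / 2) :=
        add_le_add hpiece1 hpiece2
    _ ≤ 16 / d ^ 3 := by
        have h1 : (3 * (d / 2) ^ 3)⁻¹ = 8 / (3 * d ^ 3) := by
          field_simp; ring
        have h2 : ((d / 2) ^ 4)⁻¹ * (d / 2) = 8 / d ^ 3 := by
          field_simp; ring
        rw [h1, h2]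
        have key : 8 / (3 * d ^ 3) + 8 / d ^ 3 ≤ 16 / d ^ 3 := by
          rw [div_add_div _ _ (by positivity) (by positivity), div_le_div_iff₀ (by positivity)
            (by positivity)]
          nlinarith [pow_pos hd0 3]
        have h3 : (0 : ℝ) ≤ 3⁻¹ := by norm_num
        linarith
end

section
/- Let f be analytic on the unit disk with f(0)=0, and define the backward shift S_b(f)(z) = f(z)/z (extended analytically at 0). If f' belongs to the weighted Bergman space L¹_a(D,(1-|z|²)dm), then for all z ∈ D, |(S_b f)'(z)| ≤ C ∫_D |f'(w)|(1-|w|²)/|1-w̄z|³ dm(w) for an absolute constant C. -/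
open MeasureTheory Complex Metric Real

lemma rot_mp (u : Circle) : MeasurePreserving (fun w : ℂ => (u : ℂ) * w) volume volume := by
  have h : (fun w : ℂ => (u : ℂ) * w) = ⇑(rotation u) := by funext w; simp [rotation_apply]
  rw [h]; exact (rotation u).measurePreserving

lemma integral_pow_ball {r : ℝ} {n : ℕ} (hn : n ≠ 0) :
    ∫ w in ball (0:ℂ) r, w ^ n = 0 := by
  set u : Circle := Circle.exp (π / n)
  have hu : (u : ℂ) ^ n = -1 := by
    rw [Circle.coe_exp, ← Complex.exp_nat_mul]
    have hn' : (n:ℂ) ≠ 0 := Nat.cast_ne_zero.mpr hn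
    have : (n : ℂ) * (↑(π / n) * I) = ↑π * I := by
      push_cast
      field_simp
    rw [this, Complex.exp_pi_mul_I]
  have hpre : (fun w : ℂ => (u : ℂ) * w) ⁻¹' (ball (0:ℂ) r) = ball (0:ℂ) r := by
    ext w
    simp [mem_ball, dist_eq_zero, Complex.dist_eq, Circle.norm_coe]
  have hemb : MeasurableEmbedding (fun w : ℂ => (u : ℂ) * w) := by
    have h : (fun w : ℂ => (u : ℂ) * w) = ⇑(rotation u).toHomeomorph := by
      funext w; simp [rotation_apply]
    rw [h]; exact (rotation u).toHomeomorph.measurableEmbedding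
  have h := (rot_mp u).setIntegral_preimage_emb hemb (fun w : ℂ => w ^ n) (ball (0:ℂ) r)
  rw [hpre] at h
  have h2 : ∫ w in ball (0:ℂ) r, ((u:ℂ) * w) ^ n = (u:ℂ)^n * ∫ w in ball (0:ℂ) r, w ^ n := by
    simp_rw [mul_pow]
    exact integral_const_mul _ _
  rw [h2, hu] at h
  linear_combination -h/2

lemma ball_translate (c : ℂ) (r : ℝ) (G : ℂ → ℝ) :
    ∫ w in ball c r, G w = ∫ w in ball (0:ℂ) r, G (c + w) := by
  rw [← integral_indicator measurableSet_ball, ← integral_indicator measurableSet_ball]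
  rw [← MeasureTheory.integral_add_left_eq_self
    (Set.indicator (ball c r) G) c]
  congr 1
  funext w
  by_cases h : w ∈ ball (0:ℂ) r
  · have : c + w ∈ ball c r := by
      simpa [mem_ball, Complex.dist_eq] using h
    rw [Set.indicator_of_mem this, Set.indicator_of_mem h]
  · have : c + w ∉ ball c r := by
      simpa [mem_ball, Complex.dist_eq] using h
    rw [Set.indicator_of_notMem this, Set.indicator_of_notMem h]

lemma smv {F : ℂ → ℂ} {c : ℂ} {R r : ℝ} (hr : 0 < r) (hrR : r < R)
    (hF : DifferentiableOn ℂ F (ball c R)) :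
    ‖F c‖ * (π * r ^ 2) ≤ ∫ w in ball c r, ‖F w‖ := by
  have hR0 : (0:ℝ) < (r + R) / 2 := by linarith
  set R₀ : NNReal := ⟨(r + R) / 2, hR0.le⟩ with hR₀
  have hrR₀ : r < (R₀ : ℝ) := by
    show r < (r + R) / 2
    linarith
  have hsub : closedBall c (R₀ : ℝ) ⊆ ball c R := by
    apply closedBall_subset_ball
    show (r + R) / 2 < R
    linarith
  have hp : HasFPowerSeriesOnBall F (cauchyPowerSeries F c R₀) c R₀ :=
    DifferentiableOn.hasFPowerSeriesOnBall (hF.mono hsub) (by exact_mod_cast hR0)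
  set p := cauchyPowerSeries F c R₀
  set a : ℕ → ℂ := fun n => p.coeff n with ha
  have hrrad : (r.toNNReal : ENNReal) < p.radius := by
    refine lt_of_lt_of_le ?_ hp.r_le
    rw [ENNReal.coe_lt_coe]
    rw [← NNReal.coe_lt_coe, Real.coe_toNNReal r hr.le]
    exact hrR₀
  have hsummable : Summable fun n => ‖p n‖ * r ^ n := by
    have := p.summable_norm_mul_pow hrrad
    simpa [Real.coe_toNNReal r hr.le] using this
  have hsummable' : Summable fun n => ‖a n‖ * r ^ n := by
    refine Summable.of_nonneg_of_le (fun n => by positivity) (fun n => ?_) hsummable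
    exact mul_le_mul_of_nonneg_right (by
      exact le_of_eq (FormalMultilinearSeries.norm_apply_eq_norm_coef (p := p) (n := n)).symm) (by positivity)
  -- hasSum on ball
  have hsum : ∀ w ∈ ball (0:ℂ) r, HasSum (fun n => w ^ n • a n) (F (c + w)) := by
    intro w hw
    have hw' : w ∈ Metric.eball (0:ℂ) R₀ := by
      rw [Metric.mem_eball, edist_zero_right]
      refine ENNReal.coe_lt_coe.mpr ?_
      rw [← NNReal.coe_lt_coe, coe_nnnorm]
      exact lt_trans (by simpa [mem_ball, dist_zero_right] using hw) hrR₀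
    have := hp.hasSum hw'
    simpa [FormalMultilinearSeries.apply_eq_pow_smul_coeff] using this
  -- interchange
  have hmeas : ∀ n : ℕ, AEStronglyMeasurable (fun w : ℂ => w ^ n • a n)
      (volume.restrict (ball (0:ℂ) r)) :=
    fun n => ((continuous_pow n).smul continuous_const).aestronglyMeasurable
  have hvol : volume (ball (0:ℂ) r) = ENNReal.ofReal r ^ 2 * NNReal.pi :=
    Complex.volume_ball 0 r
  have hlint : ∑' n : ℕ, ∫⁻ w in ball (0:ℂ) r, ‖w ^ n • a n‖₊ ∂volume ≠ ⊤ := by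
    have hbd : ∀ n : ℕ, (∫⁻ w in ball (0:ℂ) r, ‖w ^ n • a n‖₊ ∂volume) ≤
        (‖a n‖₊ * r.toNNReal ^ n : NNReal) * volume (ball (0:ℂ) r) := by
      intro n
      have : ∀ w ∈ ball (0:ℂ) r, (‖w ^ n • a n‖₊ : ENNReal) ≤
          ((‖a n‖₊ * r.toNNReal ^ n : NNReal) : ENNReal) := by
        intro w hw
        rw [ENNReal.coe_le_coe]
        have hwn : ‖w‖₊ ≤ r.toNNReal := by
          rw [← NNReal.coe_le_coe, Real.coe_toNNReal r hr.le]
          exact (le_of_lt (by simpa [mem_ball, dist_zero_right] using hw))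
        calc ‖w ^ n • a n‖₊ = ‖w‖₊ ^ n * ‖a n‖₊ := by
              rw [nnnorm_smul, nnnorm_pow]
          _ ≤ r.toNNReal ^ n * ‖a n‖₊ := by
              exact mul_le_mul_of_nonneg_right (pow_le_pow_left₀ zero_le hwn n) zero_le
          _ = ‖a n‖₊ * r.toNNReal ^ n := mul_comm _ _
      calc ∫⁻ w in ball (0:ℂ) r, (‖w ^ n • a n‖₊ : ENNReal) ∂volume
          ≤ ∫⁻ _w in ball (0:ℂ) r, ((‖a n‖₊ * r.toNNReal ^ n : NNReal) : ENNReal) ∂volume :=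
            setLIntegral_mono' measurableSet_ball this
        _ = (‖a n‖₊ * r.toNNReal ^ n : NNReal) * volume (ball (0:ℂ) r) := by
            rw [setLIntegral_const]
    refine ne_top_of_le_ne_top ?_ (ENNReal.tsum_le_tsum hbd)
    rw [ENNReal.tsum_mul_right]
    refine ENNReal.mul_ne_top ?_ (by rw [hvol]; exact ENNReal.mul_ne_top (by simp [ENNReal.pow_ne_top]) ENNReal.coe_ne_top)
    rw [ENNReal.tsum_coe_ne_top_iff_summable]
    rw [← NNReal.summable_coe]
    simpa [NNReal.coe_mul, Real.coe_toNNReal r hr.le] using hsummable'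
  have hinterchange : ∫ w in ball (0:ℂ) r, F (c + w) =
      ∑' n : ℕ, ∫ w in ball (0:ℂ) r, w ^ n • a n := by
    rw [← MeasureTheory.integral_tsum hmeas hlint]
    refine setIntegral_congr_fun measurableSet_ball (fun w hw => ?_)
    exact ((hsum w hw).tsum_eq).symm
  have hterm0 : ∫ w in ball (0:ℂ) r, (w:ℂ) ^ 0 • a 0 = (π * r ^ 2) • a 0 := by
    simp only [pow_zero, one_smul]
    rw [setIntegral_const]
    congr 1
    rw [measureReal_def, hvol, ENNReal.toReal_mul, ENNReal.toReal_pow, ENNReal.toReal_ofReal hr.le,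
      ENNReal.coe_toReal]
    rw [mul_comm]
    congr 1
  have htermn : ∀ n : ℕ, n ≠ 0 → ∫ w in ball (0:ℂ) r, (w:ℂ) ^ n • a n = 0 := by
    intro n hn
    simp_rw [smul_eq_mul]
    rw [integral_mul_const, integral_pow_ball hn, zero_mul]
  have hkey : ∫ w in ball (0:ℂ) r, F (c + w) = (π * r ^ 2) • F c := by
    rw [hinterchange, tsum_eq_single 0 (fun n hn => htermn n hn), hterm0]
    congr 1
    have h0 := hp.coeff_zero (fun _ => 1)
    have : a 0 = p 0 (fun _ => 1) := by
      rw [ha]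
      simp [FormalMultilinearSeries.apply_eq_prod_smul_coeff]
    rw [this, h0]
  calc ‖F c‖ * (π * r ^ 2) = ‖(π * r ^ 2) • F c‖ := by
        rw [norm_smul, Real.norm_eq_abs, _root_.abs_of_nonneg (show (0:ℝ) ≤ π * r ^ 2 by positivity)]
        ring
    _ = ‖∫ w in ball (0:ℂ) r, F (c + w)‖ := by rw [hkey]
    _ ≤ ∫ w in ball (0:ℂ) r, ‖F (c + w)‖ := norm_integral_le_integral_norm _
    _ = ∫ w in ball c r, ‖F w‖ := (ball_translate c r (fun w => ‖F w‖)).symm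

set_option maxHeartbeats 1000000 in
/-- Derivative estimate for the backward shift S_b(f)(z) = f(z)/z of an analytic
function with f(0)=0 whose derivative lies in the weighted Bergman space. -/
theorem stmt3 :
    ∃ C > (0 : ℝ), ∀ f g : ℂ → ℂ,
      DifferentiableOn ℂ f (Metric.ball 0 1) → f 0 = 0 →
      DifferentiableOn ℂ g (Metric.ball 0 1) →
      (∀ z ∈ Metric.ball (0 : ℂ) 1, z * g z = f z) →
      MeasureTheory.IntegrableOn (fun w : ℂ => ‖deriv f w‖ * (1 - ‖w‖ ^ 2))
        (Metric.ball (0 : ℂ) 1) volume →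
      ∀ z ∈ Metric.ball (0 : ℂ) 1,
        ‖deriv g z‖ ≤ C * ∫ w in Metric.ball (0 : ℂ) 1,
          ‖deriv f w‖ * (1 - ‖w‖ ^ 2) / ‖1 - (starRingEnd ℂ) w * z‖ ^ 3 := by
  refine ⟨7500, by norm_num, ?_⟩
  intro f g hf hf0 hg hzg hInt z hzball
  have hz : ‖z‖ < 1 := by simpa [mem_ball, dist_zero_right] using hzball
  set K : ℂ → ℝ := fun w => ‖deriv f w‖ * (1 - ‖w‖ ^ 2) / ‖1 - (starRingEnd ℂ) w * z‖ ^ 3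
    with hK
  set Iz : ℝ := ∫ w in ball (0:ℂ) 1, K w with hIz
  -- analyticity facts
  have hfa : AnalyticOnNhd ℂ f (ball (0:ℂ) 1) := hf.analyticOnNhd isOpen_ball
  have hfd' : DifferentiableOn ℂ (deriv f) (ball (0:ℂ) 1) := hfa.deriv.differentiableOn
  have hcont : ContinuousOn (deriv f) (ball (0:ℂ) 1) := hfd'.continuousOn
  -- the denominator is bounded below
  have hdenom : ∀ w : ℂ, ‖w‖ ≤ 1 → 1 - ‖w‖ * ‖z‖ ≤ ‖1 - (starRingEnd ℂ) w * z‖ := by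
    intro w hw
    have h1 : ‖(starRingEnd ℂ) w * z‖ = ‖w‖ * ‖z‖ := by
      rw [norm_mul, RCLike.norm_conj]
    calc 1 - ‖w‖ * ‖z‖ = ‖(1:ℂ)‖ - ‖(starRingEnd ℂ) w * z‖ := by rw [h1, norm_one]
      _ ≤ ‖1 - (starRingEnd ℂ) w * z‖ := norm_sub_norm_le _ _
  have hdenom_pos : ∀ w ∈ ball (0:ℂ) 1, 0 < ‖1 - (starRingEnd ℂ) w * z‖ := by
    intro w hw
    have hw' : ‖w‖ < 1 := by simpa [mem_ball, dist_zero_right] using hw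
    refine lt_of_lt_of_le ?_ (hdenom w hw'.le)
    nlinarith [norm_nonneg w, norm_nonneg z]
  -- K is nonnegative on the ball
  have hKnonneg : ∀ w ∈ ball (0:ℂ) 1, 0 ≤ K w := by
    intro w hw
    have hw' : ‖w‖ < 1 := by simpa [mem_ball, dist_zero_right] using hw
    have : (0:ℝ) ≤ 1 - ‖w‖ ^ 2 := by nlinarith [norm_nonneg w]
    positivity
  -- K is integrable on the ball
  have hKcont : ContinuousOn K (ball (0:ℂ) 1) := by
    apply ContinuousOn.div
    · exact (hcont.norm.mul ((continuous_const.sub (continuous_norm.pow 2)).continuousOn))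
    · exact ((continuous_const.sub ((Complex.continuous_conj.mul continuous_const))).norm.pow
        3).continuousOn
    · intro w hw
      exact pow_ne_zero 3 (ne_of_gt (hdenom_pos w hw))
  have hKint : IntegrableOn K (ball (0:ℂ) 1) volume := by
    have hzpos : (0:ℝ) < 1 - ‖z‖ := by linarith
    refine Integrable.mono' (g := fun w => (1 - ‖z‖)⁻¹ ^ 3 * (‖deriv f w‖ * (1 - ‖w‖ ^ 2)))
      (hInt.const_mul _) (hKcont.aestronglyMeasurable measurableSet_ball) ?_
    rw [ae_restrict_iff' measurableSet_ball]
    filter_upwards with w hw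
    have hw' : ‖w‖ < 1 := by simpa [mem_ball, dist_zero_right] using hw
    have hnum : (0:ℝ) ≤ ‖deriv f w‖ * (1 - ‖w‖ ^ 2) := by
      have : (0:ℝ) ≤ 1 - ‖w‖ ^ 2 := by nlinarith [norm_nonneg w]
      positivity
    have hd1 : 1 - ‖z‖ ≤ ‖1 - (starRingEnd ℂ) w * z‖ := by
      refine le_trans ?_ (hdenom w hw'.le)
      nlinarith [norm_nonneg w, norm_nonneg z]
    have hd3 : (1 - ‖z‖) ^ 3 ≤ ‖1 - (starRingEnd ℂ) w * z‖ ^ 3 :=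
      pow_le_pow_left₀ hzpos.le hd1 3
    rw [Real.norm_eq_abs, _root_.abs_of_nonneg (hKnonneg w hw)]
    rw [hK]
    rw [div_le_iff₀ (pow_pos (hdenom_pos w hw) 3)]
    calc ‖deriv f w‖ * (1 - ‖w‖ ^ 2) = ((1 - ‖z‖)⁻¹ ^ 3 * (‖deriv f w‖ * (1 - ‖w‖ ^ 2)))
          * (1 - ‖z‖) ^ 3 := by
          rw [mul_comm ((1 - ‖z‖)⁻¹ ^ 3) _, mul_assoc, ← mul_pow, inv_mul_cancel₀ hzpos.ne',
            one_pow, mul_one]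
      _ ≤ ((1 - ‖z‖)⁻¹ ^ 3 * (‖deriv f w‖ * (1 - ‖w‖ ^ 2))) * ‖1 - (starRingEnd ℂ) w * z‖ ^ 3 := by
          apply mul_le_mul_of_nonneg_left hd3
          positivity
  have hIznn : 0 ≤ Iz := setIntegral_nonneg measurableSet_ball hKnonneg
  -- MAIN POINTWISE LEMMA
  have hL : ∀ v : ℂ, ∀ A : ℝ, 1 ≤ A → ‖v‖ < 1 →
      ‖1 - (starRingEnd ℂ) v * z‖ ≤ A * (1 - ‖v‖) →
      ‖deriv f v‖ ≤ 8 * (A+1)^3 / π * Iz := by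
    intro v A hA hv hvz
    set δ : ℝ := 1 - ‖v‖ with hδdef
    have hδ : 0 < δ := by simp only [hδdef]; linarith
    have hsubR : ball v (3*δ/4) ⊆ ball (0:ℂ) 1 := by
      intro w hw
      rw [mem_ball, dist_zero_right]
      rw [mem_ball, dist_eq_norm] at hw
      calc ‖w‖ = ‖(w - v) + v‖ := by ring_nf
        _ ≤ ‖w - v‖ + ‖v‖ := norm_add_le _ _
        _ < 1 := by simp only [hδdef] at hw ⊢; linarith
    have hsubcb : closedBall v (δ/2) ⊆ ball (0:ℂ) 1 := by
      refine subset_trans ?_ hsubR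
      intro w hw
      rw [mem_closedBall] at hw
      rw [mem_ball]
      linarith
    have hsmv : ‖deriv f v‖ * (π * (δ/2)^2) ≤ ∫ w in ball v (δ/2), ‖deriv f w‖ :=
      smv (by linarith) (by linarith) (hfd'.mono hsubR)
    have hptwise : ∀ w ∈ ball v (δ/2), ‖deriv f w‖ ≤ 2*(A+1)^3*δ^2 * K w := by
      intro w hw
      have hwball : w ∈ ball (0:ℂ) 1 := hsubcb (ball_subset_closedBall hw)
      have hwv : ‖w - v‖ < δ/2 := by rwa [mem_ball, dist_eq_norm] at hw
      have hwn : ‖w‖ ≤ 1 - δ/2 := by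
        calc ‖w‖ = ‖(w - v) + v‖ := by ring_nf
          _ ≤ ‖w - v‖ + ‖v‖ := norm_add_le _ _
          _ ≤ 1 - δ/2 := by simp only [hδdef] at *; linarith
      have hw1 : δ/2 ≤ 1 - ‖w‖ ^ 2 := by nlinarith [norm_nonneg w]
      have hDle : ‖1 - (starRingEnd ℂ) w * z‖ ≤ (A+1)*δ := by
        have hsplit : (1 : ℂ) - (starRingEnd ℂ) w * z =
            (1 - (starRingEnd ℂ) v * z) + ((starRingEnd ℂ) (v - w)) * z := by
          rw [map_sub]
          ring
        rw [hsplit]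
        calc ‖(1 - (starRingEnd ℂ) v * z) + ((starRingEnd ℂ) (v - w)) * z‖
            ≤ ‖1 - (starRingEnd ℂ) v * z‖ + ‖((starRingEnd ℂ) (v - w)) * z‖ := norm_add_le _ _
          _ ≤ A * δ + (δ/2) * 1 := by
              refine add_le_add hvz ?_
              rw [norm_mul, RCLike.norm_conj]
              have h1 : ‖v - w‖ ≤ δ/2 := by rw [← norm_neg]; simpa [neg_sub] using hwv.le
              exact mul_le_mul h1 hz.le (norm_nonneg z) (by linarith)
          _ ≤ (A+1)*δ := by nlinarith
      have hDpos : 0 < ‖1 - (starRingEnd ℂ) w * z‖ := hdenom_pos w hwball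
      have hDpow : ‖1 - (starRingEnd ℂ) w * z‖^3 ≤ ((A+1)*δ)^3 :=
        pow_le_pow_left₀ hDpos.le hDle 3
      have hNnn : (0:ℝ) ≤ ‖deriv f w‖ := norm_nonneg _
      have key : ‖deriv f w‖ * ‖1 - (starRingEnd ℂ) w * z‖^3 ≤
          2*(A+1)^3*δ^2 * (‖deriv f w‖ * (1 - ‖w‖ ^ 2)) := by
        have e1 : ((A+1)*δ)^3 = (A+1)^3 * δ^3 := by ring
        have h2 : ‖deriv f w‖ * ‖1 - (starRingEnd ℂ) w * z‖^3 ≤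
            ‖deriv f w‖ * ((A+1)^3 * δ^3) := by
          rw [← e1]; exact mul_le_mul_of_nonneg_left hDpow hNnn
        have h3 : ‖deriv f w‖ * ((A+1)^3 * δ^3) ≤
            2*(A+1)^3*δ^2 * (‖deriv f w‖ * (δ/2)) := by
          have : 2*(A+1)^3*δ^2 * (‖deriv f w‖ * (δ/2)) = ‖deriv f w‖ * ((A+1)^3 * δ^3) := by
            ring
          rw [this]
        have h4 : 2*(A+1)^3*δ^2 * (‖deriv f w‖ * (δ/2)) ≤
            2*(A+1)^3*δ^2 * (‖deriv f w‖ * (1 - ‖w‖ ^ 2)) := by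
          apply mul_le_mul_of_nonneg_left _ (by positivity)
          exact mul_le_mul_of_nonneg_left hw1 hNnn
        exact le_trans h2 (le_trans h3 h4)
      calc ‖deriv f w‖ = ‖deriv f w‖ * ‖1 - (starRingEnd ℂ) w * z‖^3 /
            ‖1 - (starRingEnd ℂ) w * z‖^3 := by
            rw [mul_div_assoc, div_self (ne_of_gt (pow_pos hDpos 3)), mul_one]
        _ ≤ 2*(A+1)^3*δ^2 * (‖deriv f w‖ * (1 - ‖w‖ ^ 2)) /
            ‖1 - (starRingEnd ℂ) w * z‖^3 :=
            (div_le_div_iff_of_pos_right (pow_pos hDpos 3)).mpr key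
        _ = 2*(A+1)^3*δ^2 * K w := by rw [hK]; ring
    have hint1 : IntegrableOn (fun w => ‖deriv f w‖) (ball v (δ/2)) volume := by
      apply IntegrableOn.mono_set (t := closedBall v (δ/2)) _ ball_subset_closedBall
      exact ((hcont.norm.mono hsubcb).integrableOn_compact (isCompact_closedBall v (δ/2)))
    have hint2 : IntegrableOn (fun w => 2*(A+1)^3*δ^2 * K w) (ball v (δ/2)) volume := by
      exact (hKint.mono_set (subset_trans (fun x h => h) (subset_trans ball_subset_closedBall hsubcb))).const_mul _
    have h2 : ∫ w in ball v (δ/2), ‖deriv f w‖ ≤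
        ∫ w in ball v (δ/2), 2*(A+1)^3*δ^2 * K w :=
      setIntegral_mono_on hint1 hint2 measurableSet_ball hptwise
    have h3 : ∫ w in ball v (δ/2), K w ≤ Iz := by
      rw [hIz]
      apply setIntegral_mono_set hKint
      · filter_upwards [ae_restrict_mem measurableSet_ball] with w hw
        exact hKnonneg w hw
      · exact HasSubset.Subset.eventuallyLE (subset_trans ball_subset_closedBall hsubcb)
    have h4 : ∫ w in ball v (δ/2), 2*(A+1)^3*δ^2 * K w = 2*(A+1)^3*δ^2 * ∫ w in ball v (δ/2), K w := by
      exact integral_const_mul _ _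
    have hcombine : ‖deriv f v‖ * (π * (δ/2)^2) ≤ 2*(A+1)^3*δ^2 * Iz := by
      rw [h4] at h2
      have : 2*(A+1)^3*δ^2 * ∫ w in ball v (δ/2), K w ≤ 2*(A+1)^3*δ^2 * Iz := by
        apply mul_le_mul_of_nonneg_left h3 (by positivity)
      linarith
    have hpi := Real.pi_pos
    rw [div_mul_eq_mul_div, le_div_iff₀ hpi]
    have hδ2 : (0:ℝ) < δ^2 := by positivity
    have hcombine' : ‖deriv f v‖ * π * δ^2 / 4 ≤ 2*(A+1)^3*δ^2*Iz := by
      calc ‖deriv f v‖ * π * δ^2 / 4 = ‖deriv f v‖ * (π * (δ/2)^2) := by ring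
        _ ≤ 2*(A+1)^3*δ^2*Iz := hcombine
    have h5 : ‖deriv f v‖ * π * δ^2 ≤ 8*(A+1)^3*Iz * δ^2 := by
      clear_value δ Iz
      linarith
    exact le_of_mul_le_mul_right h5 hδ2
  -- bound along rays
  have hB : ∀ t : ℝ, 0 ≤ t → t ≤ 1 → ‖deriv f ((t:ℂ) * z)‖ ≤ 69 * Iz := by
    intro t ht0 ht1
    have htz : ‖(t:ℂ) * z‖ = t * ‖z‖ := by
      rw [norm_mul, Complex.norm_real, Real.norm_eq_abs, _root_.abs_of_nonneg ht0]
    have htz1 : ‖(t:ℂ) * z‖ < 1 := by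
      rw [htz]; nlinarith [norm_nonneg z]
    have hcz : ‖1 - (starRingEnd ℂ) ((t:ℂ)*z) * z‖ ≤ 2 * (1 - ‖(t:ℂ)*z‖) := by
      have he : (starRingEnd ℂ) ((t:ℂ)*z) * z = (((t * ‖z‖^2 : ℝ)) : ℂ) := by
        rw [map_mul, Complex.conj_ofReal, mul_assoc, mul_comm ((starRingEnd ℂ) z) z,
          Complex.mul_conj]
        push_cast
        rw [Complex.normSq_eq_norm_sq]
        push_cast
        ring
      rw [he]
      have : (1 : ℂ) - ((t * ‖z‖^2 : ℝ) : ℂ) = (((1 - t * ‖z‖^2 : ℝ)) : ℂ) := by push_cast; ring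
      rw [this, Complex.norm_real, Real.norm_eq_abs,
        _root_.abs_of_nonneg (by nlinarith [norm_nonneg z] : (0:ℝ) ≤ 1 - t * ‖z‖^2), htz]
      nlinarith [norm_nonneg z, sq_nonneg (1 - ‖z‖), mul_nonneg ht0 (norm_nonneg z)]
    have := hL ((t:ℂ)*z) 2 one_le_two htz1 hcz
    refine le_trans this ?_
    have hc : 8 * (2+1:ℝ)^3 / π ≤ 69 := by
      rw [div_le_iff₀ Real.pi_pos]
      nlinarith [Real.pi_gt_d6]
    exact mul_le_mul_of_nonneg_right hc hIznn
  have hB' : ∀ v : ℂ, ‖v‖ ≤ 3/4 → ‖deriv f v‖ ≤ 1857 * Iz := by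
    intro v hv34
    have hv1 : ‖v‖ < 1 := lt_of_le_of_lt hv34 (by norm_num)
    have hcz : ‖1 - (starRingEnd ℂ) v * z‖ ≤ 8 * (1 - ‖v‖) := by
      calc ‖1 - (starRingEnd ℂ) v * z‖ ≤ ‖(1:ℂ)‖ + ‖(starRingEnd ℂ) v * z‖ := norm_sub_le _ _
        _ = 1 + ‖v‖ * ‖z‖ := by rw [norm_one, norm_mul, RCLike.norm_conj]
        _ ≤ 2 := by nlinarith [norm_nonneg v, norm_nonneg z]
        _ ≤ 8 * (1 - ‖v‖) := by linarith
    have := hL v 8 (by norm_num) hv1 hcz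
    refine le_trans this ?_
    have hc : 8 * (8+1:ℝ)^3 / π ≤ 1857 := by
      rw [div_le_iff₀ Real.pi_pos]
      nlinarith [Real.pi_gt_d6]
    exact mul_le_mul_of_nonneg_right hc hIznn
  -- FTC bound
  have hFTC : ∀ u : ℂ, ‖u‖ < 1 → ∀ M : ℝ,
      (∀ t : ℝ, 0 ≤ t → t ≤ 1 → ‖deriv f ((t:ℂ) * u)‖ ≤ M) → ‖f u‖ ≤ ‖u‖ * M := by
    intro u hu M hM
    have hmem : ∀ t : ℝ, 0 ≤ t → t ≤ 1 → ((t:ℂ) * u) ∈ ball (0:ℂ) 1 := by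
      intro t ht0 ht1
      rw [mem_ball, dist_zero_right, norm_mul, Complex.norm_real, Real.norm_eq_abs,
        _root_.abs_of_nonneg ht0]
      nlinarith [norm_nonneg u]
    have hderivt : ∀ t ∈ Set.uIcc (0:ℝ) 1,
        HasDerivAt (fun s : ℝ => f ((s:ℂ) * u)) (u * deriv f ((t:ℂ) * u)) t := by
      intro t ht
      rw [Set.uIcc_of_le zero_le_one] at ht
      have hdf : HasDerivAt f (deriv f ((t:ℂ) * u)) ((t:ℂ) * u) :=
        (hf.differentiableAt (isOpen_ball.mem_nhds (hmem t ht.1 ht.2))).hasDerivAt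
      have hinner : HasDerivAt (fun w : ℂ => w * u) u (t:ℂ) := by
        simpa using (hasDerivAt_id (t:ℂ)).mul_const u
      have hcomp : HasDerivAt (fun w : ℂ => f (w * u)) (deriv f ((t:ℂ) * u) * u) (t:ℂ) :=
        HasDerivAt.comp _ hdf hinner
      have := hcomp.comp_ofReal
      simpa [mul_comm] using this
    have hcontt : ContinuousOn (fun t : ℝ => u * deriv f ((t:ℂ) * u)) (Set.uIcc (0:ℝ) 1) := by
      apply ContinuousOn.mul continuousOn_const
      apply hcont.comp
      · exact (Complex.continuous_ofReal.mul continuous_const).continuousOn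
      · intro t ht
        rw [Set.uIcc_of_le zero_le_one] at ht
        exact hmem t ht.1 ht.2
    have hii : IntervalIntegrable (fun t : ℝ => u * deriv f ((t:ℂ) * u)) volume 0 1 :=
      hcontt.intervalIntegrable
    have heq : ∫ t in (0:ℝ)..1, u * deriv f ((t:ℂ) * u) = f u - f 0 := by
      have := intervalIntegral.integral_eq_sub_of_hasDerivAt hderivt hii
      simpa using this
    have hfu : f u = ∫ t in (0:ℝ)..1, u * deriv f ((t:ℂ) * u) := by
      rw [heq, hf0, sub_zero]
    rw [hfu]
    have := intervalIntegral.norm_integral_le_of_norm_le_const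
      (C := ‖u‖ * M) (a := (0:ℝ)) (b := 1) (f := fun t => u * deriv f ((t:ℂ) * u)) ?_
    · simpa using this
    · intro t ht
      rw [Set.uIoc_of_le zero_le_one] at ht
      rw [norm_mul]
      exact mul_le_mul_of_nonneg_left (hM t ht.1.le ht.2) (norm_nonneg u)
  -- derivative of g at 0 equals f' 0 trick, and product rule elsewhere
  have hprod : ∀ u ∈ ball (0:ℂ) 1, deriv f u = g u + u * deriv g u := by
    intro u hu
    have h1 : HasDerivAt (fun w => w * g w) (1 * g u + u * deriv g u) u :=
      (hasDerivAt_id u).mul ((hg.differentiableAt (isOpen_ball.mem_nhds hu)).hasDerivAt)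
    have hev : (fun w => w * g w) =ᶠ[nhds u] f := by
      filter_upwards [isOpen_ball.mem_nhds hu] with w hw
      exact hzg w hw
    have h2 : HasDerivAt f (1 * g u + u * deriv g u) u := h1.congr_of_eventuallyEq hev.symm
    rw [h2.deriv]
    ring
  by_cases hzhalf : (1/2 : ℝ) ≤ ‖z‖
  · -- large |z| : use the algebraic formula
    have hzne : z ≠ 0 := by
      intro h
      rw [h] at hzhalf
      norm_num at hzhalf
    have hgz : g z = f z / z := by
      field_simp
      linear_combination (hzg z hzball)
    have hfz : ‖f z‖ ≤ ‖z‖ * (69 * Iz) := hFTC z hz _ hB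
    have hgznorm : ‖g z‖ ≤ 138 * Iz := by
      rw [hgz]
      rw [norm_div]
      rw [div_le_iff₀ (norm_pos_iff.mpr hzne)]
      calc ‖f z‖ ≤ ‖z‖ * (69 * Iz) := hfz
        _ ≤ 138 * Iz * ‖z‖ := by nlinarith [norm_nonneg z, hz, hIznn]
    have hdg : deriv g z = (deriv f z - g z) / z := by
      have := hprod z hzball
      field_simp
      linear_combination -this
    rw [hdg, norm_div]
    rw [div_le_iff₀ (norm_pos_iff.mpr hzne)]
    have h1 : ‖deriv f z - g z‖ ≤ ‖deriv f z‖ + ‖g z‖ := norm_sub_le _ _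
    have h2 : ‖deriv f z‖ ≤ 69 * Iz := by simpa using hB 1 zero_le_one le_rfl
    nlinarith [hIznn, norm_nonneg (deriv f z - g z)]
  · -- small |z| : Cauchy estimate on circle of radius 1/4
    push_neg at hzhalf
    have hsub : closedBall z (1/4) ⊆ ball (0:ℂ) 1 := by
      intro u hu
      rw [mem_closedBall] at hu
      rw [mem_ball]
      calc dist u 0 ≤ dist u z + dist z 0 := dist_triangle _ _ _
        _ < 1 := by
          rw [dist_zero_right] at *
          linarith
    have hdcc : DiffContOnCl ℂ g (ball z (1/4)) := by
      apply DifferentiableOn.diffContOnCl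
      apply hg.mono
      refine subset_trans ?_ hsub
      rw [closure_ball z (by norm_num : (1/4:ℝ) ≠ 0)]
    have hsup : ∀ u ∈ sphere z (1/4), ‖g u‖ ≤ 1857 * Iz := by
      intro u hu
      have hu1 : ‖u‖ ≤ 3/4 := by
        have := mem_sphere_iff_norm.mp hu
        calc ‖u‖ = ‖(u - z) + z‖ := by ring_nf
          _ ≤ ‖u - z‖ + ‖z‖ := norm_add_le _ _
          _ ≤ 3/4 := by rw [this]; linarith
      have huball : u ∈ ball (0:ℂ) 1 := by
        apply hsub
        rw [mem_closedBall, dist_eq_norm]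
        rw [mem_sphere_iff_norm] at hu
        rw [hu]
      by_cases hune : u = 0
      · -- g 0 = deriv f 0
        have h0 : deriv f 0 = g 0 := by
          have := hprod 0 (by simp [mem_ball])
          simpa using this
        rw [hune, ← h0]
        exact hB' 0 (by norm_num)
      · have hgu : g u = f u / u := by
          field_simp
          linear_combination hzg u huball
        have hfu : ‖f u‖ ≤ ‖u‖ * (1857 * Iz) := by
          apply hFTC u (lt_of_le_of_lt hu1 (by norm_num)) _
          intro t ht0 ht1
          apply hB'
          calc ‖(t:ℂ) * u‖ = t * ‖u‖ := by
                rw [norm_mul, Complex.norm_real, Real.norm_eq_abs, _root_.abs_of_nonneg ht0]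
            _ ≤ 3/4 := by nlinarith [norm_nonneg u]
        rw [hgu, norm_div, div_le_iff₀ (norm_pos_iff.mpr hune)]
        calc ‖f u‖ ≤ ‖u‖ * (1857 * Iz) := hfu
          _ = 1857 * Iz * ‖u‖ := by ring
    have hcauchy : ‖deriv g z‖ ≤ (1857 * Iz) / (1/4) :=
      Complex.norm_deriv_le_of_forall_mem_sphere_norm_le (by norm_num) hdcc hsup
    calc ‖deriv g z‖ ≤ (1857 * Iz) / (1/4) := hcauchy
      _ = 7428 * Iz := by ring
      _ ≤ 7500 * Iz := by nlinarith [hIznn]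
end
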